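/- arXiv:math/0003044 — 4 statements merged into one kernel-verified Lean document; each statement's English description precedes it below -/
import Mathlib

section
/- For every complex number z with 0 < Arg(z) < π (i.e. z in the sector S₁) or -π < Arg(z) < -π/3 (z in S₋₁), one has Re((e^{-2πi/3}z)^{3/2}) = -Re((e^{2πi/3}z)^{3/2}), where all powers use the principal branch; while for |Arg(z)| < π/3 (z in S₀), one has Re((e^{-2πi/3}z)^{3/2}) = Re((e^{2πi/3}z)^{3/2}). -/
open Complex Real

lemma key_re (z : ℂ) (hz : z ≠ 0) (φ : ℝ) (h1 : -Real.pi < φ + z.arg)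
    (h2 : φ + z.arg ≤ Real.pi) :
    ((Complex.exp ((φ : ℂ) * Complex.I) * z) ^ ((3 : ℂ) / 2)).re =
      Real.exp (3 / 2 * Real.log ‖z‖) * Real.cos (3 / 2 * (φ + z.arg)) := by
  have hw : Complex.exp ((φ : ℂ) * Complex.I) * z ≠ 0 :=
    mul_ne_zero (Complex.exp_ne_zero _) hz
  have h0 : (‖z‖ : ℂ) * Complex.exp ((↑(φ + z.arg) : ℂ) * Complex.I) =
      Complex.exp ((φ : ℂ) * Complex.I) * z := by
    push_cast
    rw [add_mul, Complex.exp_add, ← mul_assoc, mul_comm ((‖z‖ : ℂ)), mul_assoc,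
      Complex.norm_mul_exp_arg_mul_I]
  have habs : ‖Complex.exp ((φ : ℂ) * Complex.I) * z‖ = ‖z‖ := by
    simp [map_mul, Complex.norm_exp]
  have harg : (Complex.exp ((φ : ℂ) * Complex.I) * z).arg = φ + z.arg := by
    rw [← h0, Complex.exp_mul_I]
    exact Complex.arg_mul_cos_add_sin_mul_I (norm_pos_iff.mpr hz) ⟨h1, h2⟩
  have h32 : ((3 : ℂ) / 2) = ((3 / 2 : ℝ) : ℂ) := by norm_num
  rw [Complex.cpow_def_of_ne_zero hw, h32, Complex.exp_re]
  simp only [Complex.mul_re, Complex.mul_im, Complex.log_re, Complex.log_im, habs, harg,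
    Complex.ofReal_re, Complex.ofReal_im, mul_zero, zero_mul, sub_zero, add_zero, zero_add]
  ring_nf

lemma exp_shift (a b : ℂ) (h : a = b + 2 * Real.pi * Complex.I) :
    Complex.exp a = Complex.exp b := by
  rw [h, Complex.exp_add, Complex.exp_two_pi_mul_I, mul_one]

lemma exp_minus_eq : Complex.exp (-(2 * Real.pi * Complex.I) / 3) =
    Complex.exp (((-(2 * Real.pi / 3) : ℝ) : ℂ) * Complex.I) := by
  push_cast; ring_nf

lemma exp_plus_eq : Complex.exp ((2 * Real.pi * Complex.I) / 3) =
    Complex.exp (((2 * Real.pi / 3 : ℝ) : ℂ) * Complex.I) := by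
  push_cast; ring_nf

lemma exp_minus_eq' : Complex.exp (-(2 * Real.pi * Complex.I) / 3) =
    Complex.exp (((4 * Real.pi / 3 : ℝ) : ℂ) * Complex.I) := by
  rw [exp_minus_eq]; exact (exp_shift _ _ (by push_cast; ring)).symm

lemma exp_plus_eq' : Complex.exp ((2 * Real.pi * Complex.I) / 3) =
    Complex.exp (((-(4 * Real.pi / 3) : ℝ) : ℂ) * Complex.I) := by
  rw [exp_plus_eq]; apply exp_shift; push_cast; ring

/-- Identity (id1): for `z` in the sector `S₁` (i.e. `π/3 < Arg z < π`) or `S₋₁`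
(i.e. `-π < Arg z < -π/3`), `Re((e^{-2πi/3}z)^{3/2}) = -Re((e^{2πi/3}z)^{3/2})`;
for `z ∈ S₀` (i.e. `|Arg z| < π/3`), `Re((e^{-2πi/3}z)^{3/2}) = Re((e^{2πi/3}z)^{3/2})`. -/
theorem stmt0 (z : ℂ) :
    (((Real.pi / 3 < z.arg ∧ z.arg < Real.pi) ∨
        (-Real.pi < z.arg ∧ z.arg < -(Real.pi / 3))) →
      ((Complex.exp (-(2 * Real.pi * Complex.I) / 3) * z) ^ ((3 : ℂ) / 2)).re =
        -((Complex.exp ((2 * Real.pi * Complex.I) / 3) * z) ^ ((3 : ℂ) / 2)).re) ∧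
    (|z.arg| < Real.pi / 3 →
      ((Complex.exp (-(2 * Real.pi * Complex.I) / 3) * z) ^ ((3 : ℂ) / 2)).re =
        ((Complex.exp ((2 * Real.pi * Complex.I) / 3) * z) ^ ((3 : ℂ) / 2)).re) := by
  have hpi := Real.pi_pos
  constructor
  · rintro (⟨h1, h2⟩ | ⟨h1, h2⟩)
    · have hz : z ≠ 0 := by
        intro h; rw [h, Complex.arg_zero] at h1; linarith
      rw [exp_minus_eq, exp_plus_eq',
        key_re z hz (-(2 * Real.pi / 3)) (by linarith) (by linarith),
        key_re z hz (-(4 * Real.pi / 3)) (by linarith) (by linarith)]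
      have e1 : 3 / 2 * (-(2 * Real.pi / 3) + z.arg) = 3 / 2 * z.arg - Real.pi := by ring
      have e2 : 3 / 2 * (-(4 * Real.pi / 3) + z.arg) = 3 / 2 * z.arg - 2 * Real.pi := by ring
      rw [e1, e2, Real.cos_sub_pi, Real.cos_sub_two_pi]
      ring
    · have hz : z ≠ 0 := by
        intro h; rw [h, Complex.arg_zero] at h2; linarith
      rw [exp_minus_eq', exp_plus_eq,
        key_re z hz (4 * Real.pi / 3) (by linarith) (by linarith),
        key_re z hz (2 * Real.pi / 3) (by linarith) (by linarith)]
      have e1 : 3 / 2 * (4 * Real.pi / 3 + z.arg) = 3 / 2 * z.arg + 2 * Real.pi := by ring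
      have e2 : 3 / 2 * (2 * Real.pi / 3 + z.arg) = 3 / 2 * z.arg + Real.pi := by ring
      rw [e1, e2, Real.cos_add_pi, Real.cos_add_two_pi]
      ring
  · intro h
    rw [abs_lt] at h
    obtain ⟨h1, h2⟩ := h
    rcases eq_or_ne z 0 with rfl | hz
    · simp [Complex.zero_cpow (by norm_num : (3 : ℂ) / 2 ≠ 0)]
    · rw [exp_minus_eq, exp_plus_eq,
        key_re z hz (-(2 * Real.pi / 3)) (by linarith) (by linarith),
        key_re z hz (2 * Real.pi / 3) (by linarith) (by linarith)]
      have e1 : 3 / 2 * (-(2 * Real.pi / 3) + z.arg) = 3 / 2 * z.arg - Real.pi := by ring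
      have e2 : 3 / 2 * (2 * Real.pi / 3 + z.arg) = 3 / 2 * z.arg + Real.pi := by ring
      rw [e1, e2, Real.cos_sub_pi, Real.cos_add_pi]
end

section
/- For every complex number z with π/3 < Arg(z) ≤ π or |Arg(z)| < π/3 (i.e. z in S₁ ∪ S₀), one has Re((e^{-2πi/3}z)^{3/2}) = -Re(z^{3/2}); while for -π < Arg(z) < -π/3 (z in S₋₁), one has Re((e^{-2πi/3}z)^{3/2}) = Re(z^{3/2}), using the principal branch of the power function throughout. -/
open Complex Real

lemma log_aux (r a θ : ℝ) (hr : (0:ℝ) < r) (h1 : -π < θ) (h2 : θ ≤ π) :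
    Complex.log (Complex.exp (((θ - a : ℝ) : ℂ) * I) * ((r : ℂ) * Complex.exp ((a:ℝ) * I)))
      = Real.log r + (θ : ℂ) * I := by
  have key : Complex.exp (((θ - a : ℝ) : ℂ) * I) * ((r : ℂ) * Complex.exp ((a:ℝ) * I))
      = (r : ℂ) * Complex.exp ((θ:ℝ) * I) := by
    rw [mul_comm ((r:ℂ)) _, ← mul_assoc, ← Complex.exp_add]
    push_cast
    ring_nf
  rw [key]
  have harg : ((r : ℂ) * Complex.exp ((θ:ℝ) * I)).arg = θ := by
    rw [Complex.arg_real_mul _ hr, Complex.exp_mul_I]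
    exact_mod_cast Complex.arg_cos_add_sin_mul_I ⟨h1, h2⟩
  have habs2 : ‖(r : ℂ) * Complex.exp ((θ:ℝ) * I)‖ = r := by
    rw [norm_mul, Complex.norm_exp_ofReal_mul_I, mul_one, Complex.norm_real, Real.norm_eq_abs, abs_of_pos hr]
  rw [Complex.log, harg, habs2]

lemma main_aux (z : ℂ) (hz : z ≠ 0) (θ : ℝ) (h1 : -π < θ) (h2 : θ ≤ π)
    (hE : Complex.exp (-(2 * (Real.pi : ℂ) * Complex.I) / 3)
        = Complex.exp (((θ - z.arg : ℝ) : ℂ) * I)) :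
    (Complex.exp (-(2 * (Real.pi : ℂ) * Complex.I) / 3) * z) ^ ((3:ℂ)/2)
      = z ^ ((3:ℂ)/2) * Complex.exp ((((θ - z.arg) * (3/2) : ℝ) : ℂ) * I) := by
  have hw : Complex.exp (-(2 * (Real.pi : ℂ) * Complex.I) / 3) * z ≠ 0 :=
    mul_ne_zero (Complex.exp_ne_zero _) hz
  have hzrw : Complex.exp (((θ - z.arg : ℝ) : ℂ) * I) * z
      = Complex.exp (((θ - z.arg : ℝ) : ℂ) * I)
        * ((‖z‖ : ℂ) * Complex.exp ((z.arg : ℝ) * I)) := by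
    rw [Complex.norm_mul_exp_arg_mul_I]
  have hlog : Complex.log (Complex.exp (-(2 * (Real.pi : ℂ) * Complex.I) / 3) * z)
      = Real.log ‖z‖ + (θ : ℂ) * I := by
    rw [hE, hzrw, log_aux _ _ _ (norm_pos_iff.mpr hz) h1 h2]
  rw [Complex.cpow_def_of_ne_zero hw, Complex.cpow_def_of_ne_zero hz, hlog, Complex.log,
    ← Complex.exp_add]
  congr 1
  push_cast
  ring

/-- Identity (id2): for `z ∈ S₁ ∪ S₀` (i.e. `π/3 < Arg z ≤ π` or `|Arg z| < π/3`),
`Re((e^{-2πi/3}z)^{3/2}) = -Re(z^{3/2})`; for `z ∈ S₋₁` (i.e. `-π < Arg z < -π/3`),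
`Re((e^{-2πi/3}z)^{3/2}) = Re(z^{3/2})`. -/
theorem stmt1 (z : ℂ) :
    (((Real.pi / 3 < z.arg ∧ z.arg ≤ Real.pi) ∨ |z.arg| < Real.pi / 3) →
      ((Complex.exp (-(2 * Real.pi * Complex.I) / 3) * z) ^ ((3 : ℂ) / 2)).re =
        -((z ^ ((3 : ℂ) / 2)).re)) ∧
    ((-Real.pi < z.arg ∧ z.arg < -(Real.pi / 3)) →
      ((Complex.exp (-(2 * Real.pi * Complex.I) / 3) * z) ^ ((3 : ℂ) / 2)).re =
        (z ^ ((3 : ℂ) / 2)).re) := by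
  rcases eq_or_ne z 0 with rfl | hz
  · constructor <;> intro h <;>
      simp [Complex.zero_cpow (by norm_num : (3:ℂ)/2 ≠ 0)]
  constructor
  · intro h
    have hrange : -(π/3) < z.arg ∧ z.arg ≤ π := by
      rcases h with ⟨ha, hb⟩ | ha
      · constructor <;> [linarith [Real.pi_pos]; exact hb]
      · rw [abs_lt] at ha
        constructor
        · linarith [ha.1]
        · linarith [Real.pi_pos, ha.2]
    have key := main_aux z hz (z.arg - 2*π/3)
      (by linarith [hrange.1]) (by linarith [Real.pi_pos, hrange.2])
      (by congr 1; push_cast; ring)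
    rw [key]
    have hc : Complex.exp ((((z.arg - 2*π/3 - z.arg) * (3/2) : ℝ) : ℂ) * I) = -1 := by
      have : ((((z.arg - 2*π/3 - z.arg) * (3/2) : ℝ)) : ℂ) * I = -(π * I) := by
        push_cast; ring
      rw [this, Complex.exp_neg, Complex.exp_pi_mul_I]
      norm_num
    rw [hc, mul_neg_one, Complex.neg_re]
  · rintro ⟨h1, h2⟩
    have key := main_aux z hz (z.arg + 4*π/3)
      (by linarith [Real.pi_pos]) (by linarith)
      (by rw [Complex.exp_eq_exp_iff_exists_int]; exact ⟨-1, by push_cast; ring⟩)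
    rw [key]
    have hc : Complex.exp ((((z.arg + 4*π/3 - z.arg) * (3/2) : ℝ) : ℂ) * I) = 1 := by
      have : ((((z.arg + 4*π/3 - z.arg) * (3/2) : ℝ)) : ℂ) * I = 2 * π * I := by
        push_cast; ring
      rw [this, Complex.exp_two_pi_mul_I]
    rw [hc, mul_one]
end

section
/- Fix θ ∈ ℝ and consider the curve of λ = ρe^{iφ} (ρ > 0, |φ| < π) satisfying sin(φ/2) - (1/(24ρ²))·sin(2θ - 3φ/2) = O(ρ^{-6}) as ρ → ∞. Then along this curve Im(λ) = ρ sin φ = O(ρ^{-1}) as ρ → ∞. In particular, any curve of solutions of the equation Re((e^{-2θi/3}(e^{iθ}-λ))^{3/2}) = Re((e^{-2θi/3}(-e^{iθ}-λ))^{3/2}) going to infinity is asymptotic to the positive real axis. -/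
open Real

/-- Along the curve `λ = ρe^{iφ}` of solutions of
`sin(φ/2) - (1/(24ρ²))·sin(2θ - 3φ/2) = O(ρ^{-6})`, one has
`Im(λ) = ρ sin φ = O(ρ^{-1})` as `ρ → ∞`: the curve is asymptotic to the positive
real axis. -/
theorem stmt9 (θ C R : ℝ) (hC : 0 ≤ C) (hR : 0 < R) :
    ∃ C' R' : ℝ, 0 < R' ∧ ∀ ρ φ : ℝ, R' ≤ ρ → |φ| < Real.pi →
      |Real.sin (φ / 2) - Real.sin (2 * θ - 3 * φ / 2) / (24 * ρ ^ 2)| ≤ C / ρ ^ 6 →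
      |ρ * Real.sin φ| ≤ C' / ρ := by
  refine ⟨2 * C + 1 / 12, 1, one_pos, fun ρ φ hρ hφ h => ?_⟩
  have hρ0 : (0:ℝ) < ρ := lt_of_lt_of_le one_pos hρ
  have hb : |Real.sin (2 * θ - 3 * φ / 2) / (24 * ρ ^ 2)| ≤ 1 / (24 * ρ ^ 2) := by
    rw [abs_div, abs_of_pos (by positivity : (0:ℝ) < 24 * ρ ^ 2)]
    gcongr
    exact Real.abs_sin_le_one _
  have h1 : |Real.sin (φ / 2)| ≤ C / ρ ^ 6 + 1 / (24 * ρ ^ 2) := by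
    calc |Real.sin (φ / 2)|
        ≤ |Real.sin (φ / 2) - Real.sin (2 * θ - 3 * φ / 2) / (24 * ρ ^ 2)|
          + |Real.sin (2 * θ - 3 * φ / 2) / (24 * ρ ^ 2)| := by
          have := abs_add_le (Real.sin (φ / 2) - Real.sin (2 * θ - 3 * φ / 2) / (24 * ρ ^ 2))
            (Real.sin (2 * θ - 3 * φ / 2) / (24 * ρ ^ 2))
          simpa using this
      _ ≤ C / ρ ^ 6 + 1 / (24 * ρ ^ 2) := add_le_add h hb
  have h2 : |Real.sin φ| ≤ 2 * |Real.sin (φ / 2)| := by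
    have : Real.sin φ = 2 * Real.sin (φ / 2) * Real.cos (φ / 2) := by
      rw [← Real.sin_two_mul]; ring_nf
    rw [this, abs_mul, abs_mul, abs_two]
    calc 2 * |Real.sin (φ / 2)| * |Real.cos (φ / 2)|
        ≤ 2 * |Real.sin (φ / 2)| * 1 :=
          mul_le_mul_of_nonneg_left (Real.abs_cos_le_one _) (by positivity)
      _ = 2 * |Real.sin (φ / 2)| := mul_one _
  have h3 : |ρ * Real.sin φ| ≤ ρ * (2 * (C / ρ ^ 6 + 1 / (24 * ρ ^ 2))) := by
    rw [abs_mul, abs_of_pos hρ0]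
    exact mul_le_mul_of_nonneg_left (h2.trans (by linarith)) hρ0.le
  refine h3.trans ?_
  have hρ5 : ρ ≤ ρ ^ 5 := by
    calc ρ = ρ * 1 := (mul_one _).symm
    _ ≤ ρ * ρ ^ 4 := by nlinarith [pow_le_pow_left₀ (by norm_num : (0:ℝ) ≤ 1) hρ 4]
    _ = ρ ^ 5 := by ring
  have key : C / ρ ^ 5 ≤ C / ρ := div_le_div_of_nonneg_left hC hρ0 hρ5
  have e1 : ρ * (2 * (C / ρ ^ 6 + 1 / (24 * ρ ^ 2))) = 2 * (C / ρ ^ 5) + (1/12) / ρ := by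
    field_simp; ring
  rw [e1]
  have e2 : (2 * C + 1 / 12) / ρ = 2 * (C / ρ) + (1/12) / ρ := by field_simp
  rw [e2]
  linarith
end

section
/- Let θ ∈ (-π, π], α = -e^{iθ}, β = e^{iθ} (so Arg(β - α) = θ), and let Γ be the intersection of the rays α + r e^{2θi/3} and β + r e^{2θi/3 ∓ 2πi/3} (sign according to θ ≥ 0 or θ < 0), r ∈ [0, ∞). If θ = π/2 then Γ = 1/√3 is real, and the three arms of the set Y(α, β) = Y(-i, i) are the straight segments [i, 1/√3], [-i, 1/√3] and the ray [1/√3, ∞): indeed for θ = π/2 the curve {λ : Re((e^{-iπ/3}(i - λ))^{3/2}) = Re((e^{-iπ/3}(-i - λ))^{3/2})} contains the real interval [1/√3, ∞). -/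
open Complex Real

/-- The case `θ = π/2`: the intersection point `Γ` of the Stokes-line rays equals
`1/√3` (a real number), and the asymptotic curve
`{λ : Re((e^{-iπ/3}(i-λ))^{3/2}) = Re((e^{-iπ/3}(-i-λ))^{3/2})}` contains the real
interval `[1/√3, ∞)`. -/
theorem stmt19 :
    Complex.exp (Complex.I * ((Real.pi / 2 : ℝ) : ℂ)) +
        ((4 / Real.sqrt 3 : ℝ) : ℂ) * ((Real.sin ((Real.pi / 2) / 3) : ℝ) : ℂ) *
          Complex.exp ((2 * (((Real.pi / 2 : ℝ) : ℂ) - (Real.pi : ℂ)) * Complex.I) / 3) =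
      ((1 / Real.sqrt 3 : ℝ) : ℂ) ∧
    ∀ lam : ℝ, 1 / Real.sqrt 3 ≤ lam →
      ((Complex.exp (-(Complex.I * ((Real.pi / 3 : ℝ) : ℂ))) *
          (Complex.I - (lam : ℂ))) ^ ((3 : ℂ) / 2)).re =
      ((Complex.exp (-(Complex.I * ((Real.pi / 3 : ℝ) : ℂ))) *
          (-Complex.I - (lam : ℂ))) ^ ((3 : ℂ) / 2)).re := by
  constructor
  · have h1 : Complex.exp (Complex.I * ((Real.pi / 2 : ℝ) : ℂ)) = Complex.I := by
      rw [mul_comm, Complex.exp_mul_I, ← Complex.ofReal_cos, ← Complex.ofReal_sin,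
        Real.cos_pi_div_two, Real.sin_pi_div_two]
      simp
    have harg : (2 * (((Real.pi / 2 : ℝ) : ℂ) - (Real.pi : ℂ)) * Complex.I) / 3
        = ((-(Real.pi/3) : ℝ) : ℂ) * Complex.I := by
      push_cast; ring
    have h2 : Complex.exp ((2 * (((Real.pi / 2 : ℝ) : ℂ) - (Real.pi : ℂ)) * Complex.I) / 3)
        = ((1/2 : ℝ) : ℂ) - ((Real.sqrt 3 / 2 : ℝ):ℂ) * Complex.I := by
      rw [harg, Complex.exp_mul_I, ← Complex.ofReal_cos, ← Complex.ofReal_sin,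
        Real.cos_neg, Real.sin_neg, Real.cos_pi_div_three, Real.sin_pi_div_three]
      push_cast; ring
    have hs : Real.sin ((Real.pi / 2) / 3) = 1/2 := by
      rw [show (Real.pi/2)/3 = Real.pi/6 by ring, Real.sin_pi_div_six]
    rw [h1, h2, hs]
    have h3 : (Real.sqrt 3 : ℝ) ≠ 0 := by positivity
    have h9 : (Real.sqrt 3:ℝ) * Real.sqrt 3 = 3 := Real.mul_self_sqrt (by norm_num)
    rw [Complex.ext_iff]
    constructor <;> simp <;> field_simp <;> nlinarith [h9]
  · intro lam hlam
    have hs3 : (Real.sqrt 3:ℝ) * Real.sqrt 3 = 3 := Real.mul_self_sqrt (by norm_num)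
    have hs3pos : (0:ℝ) < Real.sqrt 3 := by positivity
    have hlpos : (0:ℝ) < lam := lt_of_lt_of_le (by positivity) hlam
    have hl3 : 1 ≤ Real.sqrt 3 * lam := by
      rw [div_le_iff₀ hs3pos] at hlam; nlinarith
    have he : Complex.exp (-(Complex.I * ((Real.pi / 3 : ℝ) : ℂ)))
        = ((1/2 : ℝ) : ℂ) - ((Real.sqrt 3 / 2 : ℝ):ℂ) * Complex.I := by
      rw [show -(Complex.I * ((Real.pi / 3 : ℝ) : ℂ)) = ((-(Real.pi/3) : ℝ) : ℂ) * Complex.I by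
        push_cast; ring, Complex.exp_mul_I, ← Complex.ofReal_cos, ← Complex.ofReal_sin,
        Real.cos_neg, Real.sin_neg, Real.cos_pi_div_three, Real.sin_pi_div_three]
      push_cast; ring
    set w₁ : ℂ := Complex.exp (-(Complex.I * ((Real.pi / 3 : ℝ) : ℂ))) * (Complex.I - (lam : ℂ)) with hw₁def
    set w₂ : ℂ := Complex.exp (-(Complex.I * ((Real.pi / 3 : ℝ) : ℂ))) * (-Complex.I - (lam : ℂ)) with hw₂def
    have hw₁ : w₁ = (((Real.sqrt 3 - lam)/2 : ℝ):ℂ) + (((1 + Real.sqrt 3 * lam)/2 : ℝ):ℂ) * Complex.I := by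
      rw [hw₁def, he]; push_cast; ring_nf; rw [Complex.I_sq]; ring
    have hw₂ : w₂ = ((-(Real.sqrt 3 + lam)/2 : ℝ):ℂ) + (((Real.sqrt 3 * lam - 1)/2 : ℝ):ℂ) * Complex.I := by
      rw [hw₂def, he]; push_cast; ring_nf; rw [Complex.I_sq]; ring
    set r : ℝ := Real.sqrt (1 + lam^2) with hrdef
    have hrpos : 0 < r := by positivity
    have hr2 : r * r = 1 + lam^2 := Real.mul_self_sqrt (by positivity)
    have habs1 : ‖w₁‖ = r := by
      rw [hw₁, Complex.norm_def, Complex.normSq_add_mul_I]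
      rw [hrdef]; congr 1; nlinarith
    have habs2 : ‖w₂‖ = r := by
      rw [hw₂, Complex.norm_def, Complex.normSq_add_mul_I]
      rw [hrdef]; congr 1; nlinarith
    have hw₁ne : w₁ ≠ 0 := by
      intro h; rw [h] at habs1; simp at habs1; exact hrpos.ne' habs1.symm
    have hw₂ne : w₂ ≠ 0 := by
      intro h; rw [h] at habs2; simp at habs2; exact hrpos.ne' habs2.symm
    set φ : ℝ := Complex.arg w₁ with hφdef
    have hφ0 : 0 ≤ φ := by
      rw [hφdef, Complex.arg_nonneg_iff, hw₁]
      simp; positivity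
    have hφpi : φ ≤ Real.pi := Complex.arg_le_pi w₁
    have hcosφ : Real.cos φ = (Real.sqrt 3 - lam)/2 / r := by
      rw [hφdef, Complex.cos_arg hw₁ne, habs1, hw₁]; simp
    have hsinφ : Real.sin φ = (1 + Real.sqrt 3 * lam)/2 / r := by
      rw [hφdef, Complex.sin_arg, habs1, hw₁]; simp
    -- φ ≥ π/3
    have hkey : Real.sqrt 3 - lam ≤ r := by nlinarith [sq_nonneg (r + lam - Real.sqrt 3)]
    have hcos_le : Real.cos φ ≤ 1/2 := by
      rw [hcosφ, div_le_iff₀ hrpos]; linarith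
    have hφ3 : Real.pi/3 ≤ φ := by
      by_contra h
      push_neg at h
      have := Real.strictAntiOn_cos ⟨hφ0, hφpi⟩
        ⟨by positivity, by linarith [Real.pi_pos]⟩ h
      rw [Real.cos_pi_div_three] at this
      linarith
    -- arg w₂
    have hrcos : r * Real.cos φ = (Real.sqrt 3 - lam)/2 := by
      rw [hcosφ]; field_simp
    have hrsin : r * Real.sin φ = (1 + Real.sqrt 3 * lam)/2 := by
      rw [hsinφ]; field_simp
    have harg2 : Complex.arg w₂ = 4*Real.pi/3 - φ := by
      have hmem : 4*Real.pi/3 - φ ∈ Set.Ioc (-Real.pi) Real.pi := by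
        constructor <;> [linarith [Real.pi_pos]; linarith]
      have hc : Real.cos (4*Real.pi/3 - φ) = -(Real.cos φ)/2 - Real.sqrt 3 * Real.sin φ/2 := by
        rw [show 4*Real.pi/3 - φ = Real.pi + (Real.pi/3 - φ) by ring]
        simp [Real.cos_add, Real.sin_add, Real.cos_sub, Real.sin_sub,
          Real.cos_pi_div_three, Real.sin_pi_div_three]
        ring
      have hsin : Real.sin (4*Real.pi/3 - φ) = -(Real.sqrt 3) * Real.cos φ/2 + Real.sin φ/2 := by
        rw [show 4*Real.pi/3 - φ = Real.pi + (Real.pi/3 - φ) by ring]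
        simp [Real.cos_add, Real.sin_add, Real.cos_sub, Real.sin_sub,
          Real.cos_pi_div_three, Real.sin_pi_div_three]
        ring
      have heq : w₂ = (r:ℂ) * (Complex.cos ((4*Real.pi/3 - φ : ℝ):ℂ)
          + Complex.sin ((4*Real.pi/3 - φ : ℝ):ℂ) * Complex.I) := by
        rw [hw₂, ← Complex.ofReal_cos, ← Complex.ofReal_sin, hc, hsin, Complex.ext_iff]
        constructor
        · simp only [Complex.add_re, Complex.add_im, Complex.mul_re, Complex.mul_im,
            Complex.ofReal_re, Complex.ofReal_im, Complex.I_re, Complex.I_im,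
            mul_zero, zero_mul, sub_zero, add_zero, mul_one, zero_sub, zero_add]
          linear_combination (1/2:ℝ)*hrcos + (Real.sqrt 3/2)*hrsin + (lam/4)*hs3
        · simp only [Complex.add_re, Complex.add_im, Complex.mul_re, Complex.mul_im,
            Complex.ofReal_re, Complex.ofReal_im, Complex.I_re, Complex.I_im,
            mul_zero, zero_mul, sub_zero, add_zero, mul_one, zero_sub, zero_add]
          linear_combination (Real.sqrt 3/2:ℝ)*hrcos - (1/2:ℝ)*hrsin + (1/4:ℝ)*hs3
      rw [heq]
      exact Complex.arg_mul_cos_add_sin_mul_I hrpos hmem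
    -- finish
    rw [Complex.cpow_def_of_ne_zero hw₁ne, Complex.cpow_def_of_ne_zero hw₂ne,
      Complex.exp_re, Complex.exp_re,
      show (3:ℂ)/2 = ((3/2 : ℝ):ℂ) by norm_num]
    simp only [Complex.mul_re, Complex.mul_im, Complex.ofReal_re, Complex.ofReal_im,
      Complex.log_re, Complex.log_im, mul_zero, zero_mul, sub_zero, add_zero, zero_add]
    rw [habs1, habs2, harg2, ← hφdef,
      show (4*Real.pi/3 - φ)*(3/2) = 2*Real.pi - φ*(3/2) by ring, Real.cos_two_pi_sub]
end
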